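/- Let κ be the unique solution in (0,1/2) of (1/2-κ)^{1-2κ} = (1-κ)^{2-2κ}. Then for every τ with κ < τ < 1/2, the quantity r(τ) := (1/2 - τ)^{1-2τ} / (1-τ)^{2-2τ} satisfies r(τ) > 1, and for every τ with 0 < τ < κ we have r(τ) < 1. -/

import Mathlib

open Real

noncomputable def gAux : ℝ → ℝ :=
  fun τ => (1 - 2*τ) * Real.log (1/2 - τ) - (2 - 2*τ) * Real.log (1 - τ)

lemma gAux_hasDerivAt {τ : ℝ} (hτ : τ ∈ Set.Ioo (0:ℝ) (1/2)) :
    HasDerivAt gAux (2 * (Real.log (1 - τ) - Real.log (1/2 - τ))) τ := by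
  obtain ⟨h0, h2⟩ := hτ
  have h1 : (0:ℝ) < 1/2 - τ := by linarith
  have h3 : (0:ℝ) < 1 - τ := by linarith
  have d1 : HasDerivAt (fun τ : ℝ => 1/2 - τ) (-1) τ := by
    simpa using (hasDerivAt_const τ (1/2:ℝ)).fun_sub (hasDerivAt_id τ)
  have d2 : HasDerivAt (fun τ : ℝ => 1 - τ) (-1) τ := by
    simpa using (hasDerivAt_const τ (1:ℝ)).fun_sub (hasDerivAt_id τ)
  have dl1 : HasDerivAt (fun τ : ℝ => Real.log (1/2 - τ)) (-1 / (1/2 - τ)) τ :=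
    d1.log h1.ne'
  have dl2 : HasDerivAt (fun τ : ℝ => Real.log (1 - τ)) (-1 / (1 - τ)) τ :=
    d2.log h3.ne'
  have da : HasDerivAt (fun τ : ℝ => 1 - 2*τ) (-2) τ := by
    simpa using (hasDerivAt_const τ (1:ℝ)).fun_sub ((hasDerivAt_id τ).const_mul 2)
  have db : HasDerivAt (fun τ : ℝ => 2 - 2*τ) (-2) τ := by
    simpa using (hasDerivAt_const τ (2:ℝ)).fun_sub ((hasDerivAt_id τ).const_mul 2)
  have := (da.fun_mul dl1).fun_sub (db.fun_mul dl2)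
  refine this.congr_deriv ?_
  have e1 : (1 - 2*τ) * (-1 / (1/2 - τ)) = -2 := by
    rw [mul_div_assoc', div_eq_iff h1.ne']; ring
  have e2 : (2 - 2*τ) * (-1 / (1 - τ)) = -2 := by
    rw [mul_div_assoc', div_eq_iff h3.ne']; ring
  rw [e1, e2]; ring

lemma gAux_strictMonoOn : StrictMonoOn gAux (Set.Ioo (0:ℝ) (1/2)) := by
  apply strictMonoOn_of_deriv_pos (convex_Ioo _ _)
  · exact fun x hx => ((gAux_hasDerivAt hx).differentiableAt.continuousAt).continuousWithinAt
  · intro x hx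
    rw [interior_Ioo] at hx
    rw [(gAux_hasDerivAt hx).deriv]
    have h1 : (0:ℝ) < 1/2 - x := by linarith [hx.2]
    have : Real.log (1/2 - x) < Real.log (1 - x) :=
      Real.log_lt_log h1 (by linarith [hx.1])
    linarith

lemma ratio_eq_exp {τ : ℝ} (hτ : τ ∈ Set.Ioo (0:ℝ) (1/2)) :
    (1/2 - τ) ^ (1 - 2*τ) / (1 - τ) ^ (2 - 2*τ) = Real.exp (gAux τ) := by
  have h1 : (0:ℝ) < 1/2 - τ := by linarith [hτ.2]
  have h3 : (0:ℝ) < 1 - τ := by linarith [hτ.2]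
  rw [Real.rpow_def_of_pos h1, Real.rpow_def_of_pos h3, ← Real.exp_sub]
  unfold gAux
  ring_nf

theorem ratio_above_one_iff_tau_above_kappa
    (κ : ℝ) (hκ : κ ∈ Set.Ioo (0:ℝ) (1/2))
    (hκeq : (1/2 - κ) ^ (1 - 2*κ) = (1 - κ) ^ (2 - 2*κ)) :
    (∀ τ : ℝ, κ < τ → τ < 1/2 →
      (1/2 - τ) ^ (1 - 2*τ) / (1 - τ) ^ (2 - 2*τ) > 1)
    ∧ (∀ τ : ℝ, 0 < τ → τ < κ →
      (1/2 - τ) ^ (1 - 2*τ) / (1 - τ) ^ (2 - 2*τ) < 1) := by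
  have hgκ : gAux κ = 0 := by
    have h1 : (0:ℝ) < 1/2 - κ := by linarith [hκ.2]
    have h3 : (0:ℝ) < 1 - κ := by linarith [hκ.2]
    have := congrArg Real.log hκeq
    rw [Real.log_rpow h1, Real.log_rpow h3] at this
    unfold gAux; linarith
  constructor
  · intro τ h1 h2
    have hτ : τ ∈ Set.Ioo (0:ℝ) (1/2) := ⟨lt_trans hκ.1 h1, h2⟩
    have := gAux_strictMonoOn hκ hτ h1
    rw [hgκ] at this
    rw [ratio_eq_exp hτ]
    calc (1:ℝ) = Real.exp 0 := Real.exp_zero.symm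
      _ < Real.exp (gAux τ) := Real.exp_lt_exp.mpr this
  · intro τ h1 h2
    have hτ : τ ∈ Set.Ioo (0:ℝ) (1/2) := ⟨h1, lt_trans h2 hκ.2⟩
    have := gAux_strictMonoOn hτ hκ h2
    rw [hgκ] at this
    rw [ratio_eq_exp hτ]
    calc Real.exp (gAux τ) < Real.exp 0 := Real.exp_lt_exp.mpr this
      _ = 1 := Real.exp_zero
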